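/- Let n, m ∈ ℕ, λ̄ > 0, and 0 < c₀ ≤ C₀ with C₀·λ̄ ≤ 1/2. Let Λ = (λ_{ij}) and Λ' = (λ'_{ij}) be matrices in ℝ^{n×m} all of whose entries lie in [c₀λ̄, C₀λ̄], and set p_{ij} = 1 − exp(−λ_{ij}) and p'_{ij} = 1 − exp(−λ'_{ij}). Then the Bhattacharyya coefficient of the corresponding product Bernoulli measures satisfies ∏_{i,j} ( √(p_{ij} p'_{ij}) + √((1 − p_{ij})(1 − p'_{ij})) ) ≤ exp( −(e^{−1} / (8·C₀·λ̄)) · Σ_{i,j} (λ_{ij} − λ'_{ij})² ). -/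
import Mathlib

set_option maxHeartbeats 1000000

open Real

private lemma exp_diff_lower (x y : ℝ) (hxy : x ≤ y) (hy : y ≤ 1/2) :
    Real.exp (-(1/2)) * (y - x) ≤ Real.exp (-x) - Real.exp (-y) := by
  have h1 : Real.exp (-y) * ((y - x) + 1) ≤ Real.exp (-y) * Real.exp (y - x) :=
    mul_le_mul_of_nonneg_left (Real.add_one_le_exp _) (Real.exp_nonneg _)
  have h2 : Real.exp (-y) * Real.exp (y - x) = Real.exp (-x) := by
    rw [← Real.exp_add]; ring_nf
  have h3 : Real.exp (-(1/2)) ≤ Real.exp (-y) := Real.exp_le_exp.2 (by linarith)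
  have h4 : Real.exp (-(1/2)) * (y - x) ≤ Real.exp (-y) * (y - x) :=
    mul_le_mul_of_nonneg_right h3 (by linarith)
  nlinarith [Real.exp_nonneg (-y)]

private lemma exp_diff_sq (x y : ℝ) (hx : x ≤ 1/2) (hy : y ≤ 1/2) :
    Real.exp (-1) * (x - y) ^ 2 ≤ (Real.exp (-x) - Real.exp (-y)) ^ 2 := by
  have he : Real.exp (-(1/2)) * Real.exp (-(1/2)) = Real.exp (-1) := by
    rw [← Real.exp_add]; norm_num
  rcases le_total x y with h | h
  · have h1 := exp_diff_lower x y h hy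
    have h0 : 0 ≤ Real.exp (-(1/2)) * (y - x) :=
      mul_nonneg (Real.exp_nonneg _) (by linarith)
    nlinarith
  · have h1 := exp_diff_lower y x h hx
    have h0 : 0 ≤ Real.exp (-(1/2)) * (x - y) :=
      mul_nonneg (Real.exp_nonneg _) (by linarith)
    nlinarith

/-- Abstract Bhattacharyya/Hellinger bound with a lower bound on `(√p - √p')²`. -/
private lemma bc_bound (p p' K : ℝ) (hp0 : 0 ≤ p) (hp1 : p ≤ 1)
    (hp'0 : 0 ≤ p') (hp'1 : p' ≤ 1) (hK : 2 * K ≤ (Real.sqrt p - Real.sqrt p') ^ 2) :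
    Real.sqrt (p * p') + Real.sqrt ((1 - p) * (1 - p')) ≤ Real.exp (-K) := by
  have hq0 : (0:ℝ) ≤ 1 - p := by linarith
  have hq'0 : (0:ℝ) ≤ 1 - p' := by linarith
  have hs : Real.sqrt p ^ 2 = p := Real.sq_sqrt hp0
  have hs' : Real.sqrt p' ^ 2 = p' := Real.sq_sqrt hp'0
  have ht : Real.sqrt (1 - p) ^ 2 = 1 - p := Real.sq_sqrt hq0
  have ht' : Real.sqrt (1 - p') ^ 2 = 1 - p' := Real.sq_sqrt hq'0
  have hmul : Real.sqrt (p * p') = Real.sqrt p * Real.sqrt p' := Real.sqrt_mul hp0 _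
  have hmul' : Real.sqrt ((1 - p) * (1 - p')) = Real.sqrt (1 - p) * Real.sqrt (1 - p') :=
    Real.sqrt_mul hq0 _
  set H : ℝ := ((Real.sqrt p - Real.sqrt p') ^ 2
      + (Real.sqrt (1 - p) - Real.sqrt (1 - p')) ^ 2) / 2 with hH
  have hBC : Real.sqrt (p * p') + Real.sqrt ((1 - p) * (1 - p')) = 1 - H := by
    rw [hmul, hmul', hH]; nlinarith [hs, hs', ht, ht']
  have hKH : K ≤ H := by
    rw [hH]; nlinarith [sq_nonneg (Real.sqrt (1 - p) - Real.sqrt (1 - p'))]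
  have h1 : 1 - H ≤ Real.exp (-H) := by have := Real.add_one_le_exp (-H); linarith
  have h2 : Real.exp (-H) ≤ Real.exp (-K) := Real.exp_le_exp.2 (by linarith)
  linarith [hBC ▸ le_trans h1 h2]

private lemma key_coord (b x y : ℝ) (hb0 : 0 < b) (hb : b ≤ 1/2)
    (hx0 : 0 < x) (hxb : x ≤ b) (hy0 : 0 < y) (hyb : y ≤ b) :
    Real.sqrt ((1 - Real.exp (-x)) * (1 - Real.exp (-y)))
      + Real.sqrt ((1 - (1 - Real.exp (-x))) * (1 - (1 - Real.exp (-y))))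
      ≤ Real.exp (-(Real.exp (-1) / (8 * b) * (x - y) ^ 2)) := by
  have hex1 : Real.exp (-x) < 1 := Real.exp_lt_one_iff.2 (by linarith)
  have hey1 : Real.exp (-y) < 1 := Real.exp_lt_one_iff.2 (by linarith)
  have hex0 : 0 < Real.exp (-x) := Real.exp_pos _
  have hey0 : 0 < Real.exp (-y) := Real.exp_pos _
  set p : ℝ := 1 - Real.exp (-x) with hp
  set p' : ℝ := 1 - Real.exp (-y) with hp'
  have hp0 : 0 ≤ p := by rw [hp]; linarith
  have hp'0 : 0 ≤ p' := by rw [hp']; linarith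
  have hp1 : p ≤ 1 := by rw [hp]; linarith
  have hp'1 : p' ≤ 1 := by rw [hp']; linarith
  have hpb : p ≤ b := by
    have := Real.add_one_le_exp (-x); rw [hp]; linarith
  have hp'b : p' ≤ b := by
    have := Real.add_one_le_exp (-y); rw [hp']; linarith
  apply bc_bound p p' _ hp0 hp1 hp'0 hp'1
  -- show 2 * (exp(-1)/(8b) * (x-y)^2) ≤ (√p - √p')^2
  have hs : Real.sqrt p ^ 2 = p := Real.sq_sqrt hp0
  have hs' : Real.sqrt p' ^ 2 = p' := Real.sq_sqrt hp'0
  have hs0 : 0 ≤ Real.sqrt p := Real.sqrt_nonneg _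
  have hs'0 : 0 ≤ Real.sqrt p' := Real.sqrt_nonneg _
  have hdiff : (Real.sqrt p - Real.sqrt p') * (Real.sqrt p + Real.sqrt p') = p - p' := by
    nlinarith [hs, hs']
  have hsum_sq : (Real.sqrt p + Real.sqrt p') ^ 2 ≤ 4 * b := by
    nlinarith [hs, hs', sq_nonneg (Real.sqrt p - Real.sqrt p'), hpb, hp'b]
  have hpp' : Real.exp (-1) * (x - y) ^ 2 ≤ (p - p') ^ 2 := by
    have h1 := exp_diff_sq x y (by linarith) (by linarith)
    have h2 : (p - p') ^ 2 = (Real.exp (-x) - Real.exp (-y)) ^ 2 := by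
      rw [hp, hp']; ring
    linarith [h2 ▸ h1]
  have hmain : Real.exp (-1) * (x - y) ^ 2 ≤ (Real.sqrt p - Real.sqrt p') ^ 2 * (4 * b) := by
    calc Real.exp (-1) * (x - y) ^ 2 ≤ (p - p') ^ 2 := hpp'
      _ = (Real.sqrt p - Real.sqrt p') ^ 2 * (Real.sqrt p + Real.sqrt p') ^ 2 := by
          rw [← hdiff]; ring
      _ ≤ (Real.sqrt p - Real.sqrt p') ^ 2 * (4 * b) :=
          mul_le_mul_of_nonneg_left hsum_sq (sq_nonneg _)
  have h4b : (0:ℝ) < 4 * b := by linarith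
  have : 2 * (Real.exp (-1) / (8 * b) * (x - y) ^ 2)
      = Real.exp (-1) * (x - y) ^ 2 / (4 * b) := by
    field_simp; ring
  rw [this, div_le_iff₀ h4b]
  exact hmain

/-- Exponential bound on the Bhattacharyya coefficient of banded product
Bernoulli measures under the Poisson intensity link. -/
theorem bhattacharyya_coefficient_bound
    (n m : ℕ) (lb c0 C0 : ℝ) (hlb : 0 < lb) (hc0 : 0 < c0) (hc0C0 : c0 ≤ C0)
    (hband : C0 * lb ≤ 1 / 2)
    (Λ Λ' : Fin n → Fin m → ℝ)
    (hΛ : ∀ i j, Λ i j ∈ Set.Icc (c0 * lb) (C0 * lb))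
    (hΛ' : ∀ i j, Λ' i j ∈ Set.Icc (c0 * lb) (C0 * lb)) :
    ∏ i, ∏ j,
        (Real.sqrt ((1 - Real.exp (-Λ i j)) * (1 - Real.exp (-Λ' i j)))
          + Real.sqrt ((1 - (1 - Real.exp (-Λ i j))) * (1 - (1 - Real.exp (-Λ' i j)))))
      ≤ Real.exp (-(Real.exp (-1) / (8 * C0 * lb)) * ∑ i, ∑ j, (Λ i j - Λ' i j) ^ 2) := by
  have hb0 : 0 < C0 * lb := by nlinarith
  have hterm : ∀ i j,
      Real.sqrt ((1 - Real.exp (-Λ i j)) * (1 - Real.exp (-Λ' i j)))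
        + Real.sqrt ((1 - (1 - Real.exp (-Λ i j))) * (1 - (1 - Real.exp (-Λ' i j))))
      ≤ Real.exp (-(Real.exp (-1) / (8 * C0 * lb)) * (Λ i j - Λ' i j) ^ 2) := by
    intro i j
    obtain ⟨h1, h2⟩ := hΛ i j
    obtain ⟨h1', h2'⟩ := hΛ' i j
    have hc0lb : 0 < c0 * lb := by positivity
    have hk := key_coord (C0 * lb) (Λ i j) (Λ' i j) hb0 hband
      (lt_of_lt_of_le hc0lb h1) h2 (lt_of_lt_of_le hc0lb h1') h2'
    have harg : -(Real.exp (-1) / (8 * (C0 * lb)) * (Λ i j - Λ' i j) ^ 2)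
        = -(Real.exp (-1) / (8 * C0 * lb)) * (Λ i j - Λ' i j) ^ 2 := by ring_nf
    exact le_of_le_of_eq hk (congrArg Real.exp harg)
  calc ∏ i, ∏ j, (Real.sqrt ((1 - Real.exp (-Λ i j)) * (1 - Real.exp (-Λ' i j)))
          + Real.sqrt ((1 - (1 - Real.exp (-Λ i j))) * (1 - (1 - Real.exp (-Λ' i j)))))
      ≤ ∏ i, ∏ j, Real.exp (-(Real.exp (-1) / (8 * C0 * lb)) * (Λ i j - Λ' i j) ^ 2) := by
        apply Finset.prod_le_prod
        · intro i _
          exact Finset.prod_nonneg fun j _ => add_nonneg (Real.sqrt_nonneg _) (Real.sqrt_nonneg _)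
        · intro i _
          exact Finset.prod_le_prod (fun j _ => add_nonneg (Real.sqrt_nonneg _) (Real.sqrt_nonneg _))
            (fun j _ => hterm i j)
    _ = Real.exp (∑ i, ∑ j, -(Real.exp (-1) / (8 * C0 * lb)) * (Λ i j - Λ' i j) ^ 2) := by
        rw [Real.exp_sum]
        exact Finset.prod_congr rfl fun i _ => (Real.exp_sum _ _).symm
    _ = Real.exp (-(Real.exp (-1) / (8 * C0 * lb)) * ∑ i, ∑ j, (Λ i j - Λ' i j) ^ 2) := by
        congr 1
        rw [Finset.mul_sum]
        exact Finset.sum_congr rfl fun i _ => (Finset.mul_sum _ _ _).symm
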